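/- There is no universal finitely generated nilpotent group: there does not exist a finitely generated nilpotent group G such that every finitely generated nilpotent group H admits an injective group homomorphism into G. -/

import Mathlib

open scoped commutatorElement

/-- Powers of 2 land deep in the lower central series of a dihedral group. -/
lemma dihedral_pow_mem_lowerCentralSeries (m : ℕ) (k : ℕ) :
    DihedralGroup.r ((2 ^ k : ℕ) : ZMod m) ∈
      (⊤ : Subgroup (DihedralGroup m)).lowerCentralSeries k := by
  induction k with
  | zero => exact Subgroup.mem_top _
  | succ k ih =>
      have hc : ⁅DihedralGroup.r ((2 ^ k : ℕ) : ZMod m), DihedralGroup.sr 0⁆ =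
          DihedralGroup.r (((2 ^ (k + 1) : ℕ) : ZMod m)) := by
        have h0 : ⁅DihedralGroup.r ((2 ^ k : ℕ) : ZMod m), DihedralGroup.sr 0⁆ =
            DihedralGroup.r (0 - (0 - ((2 ^ k : ℕ) : ZMod m) +
              -((2 ^ k : ℕ) : ZMod m))) := rfl
        rw [h0]
        congr 1
        push_cast
        ring
      have hmem : ⁅DihedralGroup.r ((2 ^ k : ℕ) : ZMod m), DihedralGroup.sr 0⁆ ∈
          (⊤ : Subgroup (DihedralGroup m)).lowerCentralSeries (k + 1) := by
        rw [Subgroup.lowerCentralSeries_succ]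
        exact Subgroup.subset_closure ⟨_, ih, _, Subgroup.mem_top _, rfl⟩
      rw [hc] at hmem
      exact hmem

/-- The nilpotency class of `DihedralGroup (2^(c+1))` exceeds `c`. -/
lemma dihedral_nilpotencyClass_gt (c : ℕ)
    [h : Group.IsNilpotent (DihedralGroup (2 ^ (c + 1)))] :
    ¬ Group.nilpotencyClass (DihedralGroup (2 ^ (c + 1))) ≤ c := by
  intro hle
  have hbot : (⊤ : Subgroup (DihedralGroup (2 ^ (c + 1)))).lowerCentralSeries c = ⊥ :=
    lowerCentralSeries_eq_bot_iff_nilpotencyClass_le.mpr hle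
  have := dihedral_pow_mem_lowerCentralSeries (2 ^ (c + 1)) c
  rw [hbot, Subgroup.mem_bot, DihedralGroup.one_def] at this
  have h2 : ((2 ^ c : ℕ) : ZMod (2 ^ (c + 1))) = 0 := by
    injection this
  rw [ZMod.natCast_eq_zero_iff] at h2
  exact absurd (Nat.pow_dvd_pow_iff_le_right (by norm_num) |>.mp h2) (by omega)

theorem no_universal_finitely_generated_nilpotent_group :
    ¬ ∃ (G : Type) (instG : Group G),
      letI := instG
      Group.FG G ∧ Group.IsNilpotent G ∧
        ∀ (H : Type) [Group H], Group.FG H → Group.IsNilpotent H →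
          ∃ φ : H →* G, Function.Injective φ := by
  rintro ⟨G, instG, hFG, hNil, huniv⟩
  letI := instG
  haveI : Group.IsNilpotent G := hNil
  set c := Group.nilpotencyClass G with hc
  set H := DihedralGroup (2 ^ (c + 1)) with hH
  haveI : NeZero (2 ^ (c + 1)) := ⟨by positivity⟩
  haveI : Fact (Nat.Prime 2) := ⟨Nat.prime_two⟩
  have hp : IsPGroup 2 H := IsPGroup.of_card (n := c + 2) (by
    rw [Nat.card_eq_fintype_card, DihedralGroup.card, pow_succ, pow_succ]
    ring)
  haveI hHnil : Group.IsNilpotent H := hp.isNilpotent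
  obtain ⟨φ, hφ⟩ := huniv H inferInstance hHnil
  -- H is isomorphic to the range of φ, a subgroup of G
  have e : H ≃* φ.range := MonoidHom.ofInjective hφ
  have h1 : Group.nilpotencyClass H ≤ Group.nilpotencyClass φ.range := by
    have := nilpotencyClass_le_of_surjective (e.symm : φ.range →* H) e.symm.surjective
    exact this
  have h2 : Group.nilpotencyClass φ.range ≤ Group.nilpotencyClass G :=
    Subgroup.nilpotencyClass_le φ.range
  exact dihedral_nilpotencyClass_gt c (h1.trans h2)
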